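/- Let 𝓗 be a finite-dimensional complex inner product space and E₁, …, E_n orthogonal projections on 𝓗 with E_j ∘ E_k = 0 for j ≠ k and Σ_j E_j = 1. Let Γ : [0,T] → (𝓗 →L[ℂ] 𝓗) be differentiable with Γ(t) unitary for each t, define A(t) := Σ_j E_j ∘ Γ(t)⁻¹ ∘ Γ′(t) ∘ E_j, and let G : [0,T] → (𝓗 →L[ℂ] 𝓗) be the solution of G′(t) = −A(t) ∘ G(t) with G(0) = 1. Then for every t ∈ [0,T]: G(t) is unitary and commutes with each E_j, and the curve U(t) := Γ(t) ∘ G(t) is horizontal, i.e., Σ_j E_j ∘ U(t)⁻¹ ∘ U′(t) ∘ E_j = 0. -/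

import Mathlib

section Helpers

/-- Constancy from vanishing derivative on `[0, T]`. -/
lemma aux_const_of_deriv_zero {X : Type*} [NormedAddCommGroup X] [NormedSpace ℝ X]
    (f f' : ℝ → X) (T : ℝ)
    (hderiv : ∀ t ∈ Set.Icc (0:ℝ) T, HasDerivAt f (f' t) t)
    (hzero : ∀ t ∈ Set.Icc (0:ℝ) T, f' t = 0) :
    ∀ t ∈ Set.Icc (0:ℝ) T, f t = f 0 := by
  intro t ht
  refine constant_of_has_deriv_right_zero
    (fun x hx => (hderiv x hx).continuousAt.continuousWithinAt) ?_ t ht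
  intro x hx
  have hx' : x ∈ Set.Icc (0:ℝ) T := Set.mem_Icc_of_Ico hx
  have := (hderiv x hx').hasDerivWithinAt (s := Set.Ici x)
  rwa [hzero x hx'] at this

lemma aux_skew_term {R : Type*} [Ring R] [StarRing R] (c x y : R)
    (hc : star c = c) (hxy : star y * x = -(star x * y)) :
    star (c * (star x * (y * c))) = -(c * (star x * (y * c))) := by
  have h1 : star (c * (star x * (y * c))) = c * ((star y * x) * c) := by
    rw [star_mul, star_mul, star_mul, star_star, hc]
    noncomm_ring
  rw [h1, hxy]
  noncomm_ring

lemma aux_unitary_deriv_zero {R : Type*} [Ring R] [StarRing R] (g a : R)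
    (sa : star a = -a) :
    star (-(a * g)) * g + star g * -(a * g) = 0 := by
  rw [star_neg, star_mul, sa]
  noncomm_ring

lemma aux_K_deriv_zero {R : Type*} [Ring R] [StarRing R] (g a e q : R)
    (sa : star a = -a) (h1 : a * e = q) (h2 : e * a = q) :
    star (-(a * g)) * (e * g) + star g * (e * -(a * g)) = 0 := by
  calc star (-(a * g)) * (e * g) + star g * (e * -(a * g))
      = -(star g * star a) * (e * g) + star g * (e * -(a * g)) := by
        rw [star_neg, star_mul]
    _ = -(star g * -a) * (e * g) + star g * (e * -(a * g)) := by rw [sa]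
    _ = star g * ((a * e) * g) - star g * ((e * a) * g) := by noncomm_ring
    _ = 0 := by rw [h1, h2]; noncomm_ring

lemma aux_horiz_term {R : Type*} [Ring R] [StarRing R] (c u g b a q : R)
    (huu : star u * u = 1)
    (hgc : g * c = c * g) (hsgc : star g * c = c * star g)
    (hcac : c * a * c = q)
    (hcBc : c * (star u * b) * c = q) :
    c * ((star g * star u) * ((b * g + u * -(a * g)) * c)) = 0 := by
  calc c * ((star g * star u) * ((b * g + u * -(a * g)) * c))
      = c * ((star g * star u) * (b * (g * c) + u * -(a * (g * c)))) := by noncomm_ring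
    _ = c * ((star g * star u) * (b * (c * g) + u * -(a * (c * g)))) := by rw [hgc]
    _ = (star g * c) * (star u * (b * (c * g))) -
        (star g * c) * ((star u * u) * (a * (c * g))) := by rw [hsgc]; noncomm_ring
    _ = (star g * c) * (star u * (b * (c * g))) -
        (star g * c) * ((1 : R) * (a * (c * g))) := by rw [huu]
    _ = star g * ((c * (star u * b) * c) * g) - star g * ((c * a * c) * g) := by noncomm_ring
    _ = 0 := by rw [hcac, hcBc]; noncomm_ring

end Helpers

open ContinuousLinearMap in
/-- Existence of horizontal lifts: if `G` solves `G′ = −A∘G`, `G(0) = 1`, with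
`A(t) = Σ_j E_j ∘ Γ(t)⁻¹ ∘ Γ′(t) ∘ E_j`, then `G(t)` is unitary, commutes with each `E_j`,
and `U(t) := Γ(t) ∘ G(t)` is horizontal for the canonical connection. -/
theorem horizontal_lift_exists
    {𝓗 : Type*} [NormedAddCommGroup 𝓗] [InnerProductSpace ℂ 𝓗] [FiniteDimensional ℂ 𝓗]
    (n : ℕ) (E : Fin n → 𝓗 →L[ℂ] 𝓗)
    (hEsa : ∀ j, IsSelfAdjoint (E j))
    (hEidem : ∀ j, E j ∘L E j = E j)
    (hEorth : ∀ j k, j ≠ k → E j ∘L E k = 0)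
    (hEsum : ∑ j, E j = 1)
    (T : ℝ) (hT : 0 < T)
    (Γ Γ' : ℝ → 𝓗 →L[ℂ] 𝓗)
    (hΓuni : ∀ t ∈ Set.Icc (0:ℝ) T, adjoint (Γ t) ∘L Γ t = 1 ∧ Γ t ∘L adjoint (Γ t) = 1)
    (hΓderiv : ∀ t ∈ Set.Icc (0:ℝ) T, HasDerivAt Γ (Γ' t) t)
    (A : ℝ → 𝓗 →L[ℂ] 𝓗)
    (hA : ∀ t, A t = ∑ j, E j ∘L adjoint (Γ t) ∘L Γ' t ∘L E j)
    (G G' : ℝ → 𝓗 →L[ℂ] 𝓗)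
    (hG0 : G 0 = 1)
    (hGderiv : ∀ t ∈ Set.Icc (0:ℝ) T, HasDerivAt G (G' t) t)
    (hGode : ∀ t ∈ Set.Icc (0:ℝ) T, G' t = -(A t ∘L G t)) :
    ∀ t ∈ Set.Icc (0:ℝ) T,
      (adjoint (G t) ∘L G t = 1 ∧ G t ∘L adjoint (G t) = 1) ∧
      (∀ j, G t ∘L E j = E j ∘L G t) ∧
      (∃ D : 𝓗 →L[ℂ] 𝓗, HasDerivAt (fun s => Γ s ∘L G s) D t ∧
        ∑ j, E j ∘L adjoint (Γ t ∘L G t) ∘L D ∘L E j = 0) := by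
  -- restate hypotheses in ring (`*`, `star`) language (all definitional)
  have hId : ∀ j, E j * E j = E j := fun j => hEidem j
  have hOr : ∀ j k, j ≠ k → E j * E k = 0 := fun j k h => hEorth j k h
  have hU1 : ∀ s ∈ Set.Icc (0:ℝ) T, star (Γ s) * Γ s = 1 := fun s hs => (hΓuni s hs).1
  have hGode' : ∀ s ∈ Set.Icc (0:ℝ) T, G' s = -(A s * G s) := fun s hs => hGode s hs
  have hA' : ∀ s, A s = ∑ j, E j * (star (Γ s) * (Γ' s * E j)) := fun s => hA s
  have hEsa' : ∀ j, star (E j) = E j := fun j => (hEsa j).star_eq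
  have hUD : UniqueDiffOn ℝ (Set.Icc (0:ℝ) T) := uniqueDiffOn_Icc hT
  -- skewness of `star Γ' * Γ`
  have hskew : ∀ s ∈ Set.Icc (0:ℝ) T, star (Γ' s) * Γ s = -(star (Γ s) * Γ' s) := by
    intro s hs
    have hd : HasDerivWithinAt (fun u => star (Γ u) * Γ u)
        (star (Γ' s) * Γ s + star (Γ s) * Γ' s) (Set.Icc (0:ℝ) T) s :=
      (((hΓderiv s hs).star).mul (hΓderiv s hs)).hasDerivWithinAt
    have h0 : HasDerivWithinAt (fun u => star (Γ u) * Γ u) 0 (Set.Icc (0:ℝ) T) s :=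
      (hasDerivWithinAt_const s _ (1 : 𝓗 →L[ℂ] 𝓗)).congr
        (fun u hu => hU1 u hu) (hU1 s hs)
    have hz : star (Γ' s) * Γ s + star (Γ s) * Γ' s = 0 := by
      rw [← hd.derivWithin (hUD s hs), ← h0.derivWithin (hUD s hs)]
    exact eq_neg_of_add_eq_zero_left hz
  -- `A` is skew-adjoint on the interval
  have hAskew : ∀ s ∈ Set.Icc (0:ℝ) T, star (A s) = -(A s) := by
    intro s hs
    rw [hA', star_sum, ← Finset.sum_neg_distrib]
    exact Finset.sum_congr rfl fun j _ =>
      aux_skew_term (E j) (Γ s) (Γ' s) (hEsa' j) (hskew s hs)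
  -- `A` commutes with each projection (both products equal `E j * B * E j`)
  have hAE : ∀ s (j : Fin n), A s * E j = E j * (star (Γ s) * (Γ' s * E j)) := by
    intro s j
    rw [hA', Finset.sum_mul, Finset.sum_eq_single j]
    · calc (E j * (star (Γ s) * (Γ' s * E j))) * E j
          = E j * (star (Γ s) * (Γ' s * (E j * E j))) := by noncomm_ring
        _ = E j * (star (Γ s) * (Γ' s * E j)) := by rw [hId j]
    · intro k _ hkj
      calc (E k * (star (Γ s) * (Γ' s * E k))) * E j
          = E k * (star (Γ s) * (Γ' s * (E k * E j))) := by noncomm_ring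
        _ = 0 := by rw [hOr k j hkj]; noncomm_ring
    · intro h; exact absurd (Finset.mem_univ j) h
  have hEA : ∀ s (j : Fin n), E j * A s = E j * (star (Γ s) * (Γ' s * E j)) := by
    intro s j
    rw [hA', Finset.mul_sum, Finset.sum_eq_single j]
    · calc E j * (E j * (star (Γ s) * (Γ' s * E j)))
          = (E j * E j) * (star (Γ s) * (Γ' s * E j)) := by noncomm_ring
        _ = E j * (star (Γ s) * (Γ' s * E j)) := by rw [hId j]
    · intro k _ hkj
      calc E j * (E k * (star (Γ s) * (Γ' s * E k)))
          = (E j * E k) * (star (Γ s) * (Γ' s * E k)) := by noncomm_ring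
        _ = 0 := by rw [hOr j k (Ne.symm hkj)]; noncomm_ring
    · intro h; exact absurd (Finset.mem_univ j) h
  -- `G` is an isometry on the interval
  have hGG : ∀ s ∈ Set.Icc (0:ℝ) T, star (G s) * G s = 1 := by
    have hc := aux_const_of_deriv_zero (fun u => star (G u) * G u)
      (fun s => star (G' s) * G s + star (G s) * G' s) T
      (fun s hs => ((hGderiv s hs).star).mul (hGderiv s hs))
      (fun s hs => by
        show star (G' s) * G s + star (G s) * G' s = 0
        rw [hGode' s hs]
        exact aux_unitary_deriv_zero (G s) (A s) (hAskew s hs))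
    intro s hs
    have h := hc s hs
    simp only [hG0, star_one, one_mul] at h
    exact h
  intro t ht
  have hGGt := hGG t ht
  -- finite dimensionality: left inverse implies right inverse
  have hGGstar : G t * star (G t) = 1 := by
    have h1 : ((star (G t) : 𝓗 →L[ℂ] 𝓗) : 𝓗 →ₗ[ℂ] 𝓗) * ((G t : 𝓗 →L[ℂ] 𝓗) : 𝓗 →ₗ[ℂ] 𝓗) = 1 := by
      have := congrArg ContinuousLinearMap.toLinearMap hGGt
      simpa [ContinuousLinearMap.mul_def, Module.End.mul_eq_comp] using this
    rw [mul_eq_one_comm] at h1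
    apply ContinuousLinearMap.coe_injective
    simpa [ContinuousLinearMap.mul_def, Module.End.mul_eq_comp] using h1
  -- conserved quantities: `star G * E j * G = E j`
  have hK : ∀ j, star (G t) * (E j * G t) = E j := by
    intro j
    have hc := aux_const_of_deriv_zero (fun u => star (G u) * (E j * G u))
      (fun s => star (G' s) * (E j * G s) + star (G s) * (E j * G' s)) T
      (fun s hs => ((hGderiv s hs).star).mul ((hGderiv s hs).const_mul (E j)))
      (fun s hs => by
        show star (G' s) * (E j * G s) + star (G s) * (E j * G' s) = 0
        rw [hGode' s hs]
        exact aux_K_deriv_zero (G s) (A s) (E j) (E j * (star (Γ s) * (Γ' s * E j)))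
          (hAskew s hs) (hAE s j) (hEA s j))
    have h := hc t ht
    simp only [hG0, star_one, one_mul, mul_one] at h
    exact h
  -- commutation with projections
  have hcomm : ∀ j, G t * E j = E j * G t := by
    intro j
    calc G t * E j = G t * (star (G t) * (E j * G t)) := by rw [hK j]
      _ = (G t * star (G t)) * (E j * G t) := by noncomm_ring
      _ = (1 : 𝓗 →L[ℂ] 𝓗) * (E j * G t) := by rw [hGGstar]
      _ = E j * G t := by rw [one_mul]
  have hscomm : ∀ j, star (G t) * E j = E j * star (G t) := by
    intro j
    have h := congrArg star (hcomm j)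
    rw [star_mul, star_mul, hEsa' j] at h
    exact h.symm
  refine ⟨⟨hGGt, hGGstar⟩, fun j => hcomm j, ?_⟩
  -- horizontality
  refine ⟨Γ' t * G t + Γ t * G' t, (hΓderiv t ht).mul (hGderiv t ht), ?_⟩
  have e1 : adjoint (Γ t ∘L G t) = star (G t) * star (Γ t) := by
    rw [show (Γ t ∘L G t) = Γ t * G t from rfl, ← star_eq_adjoint, star_mul]
  rw [hGode' t ht, e1]
  refine Finset.sum_eq_zero fun j _ => ?_
  have hqc : (E j * (star (Γ t) * (Γ' t * E j))) * E j
      = E j * (star (Γ t) * (Γ' t * E j)) := by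
    calc (E j * (star (Γ t) * (Γ' t * E j))) * E j
        = E j * (star (Γ t) * (Γ' t * (E j * E j))) := by noncomm_ring
      _ = E j * (star (Γ t) * (Γ' t * E j)) := by rw [hId j]
  have h_cac : E j * A t * E j = E j * (star (Γ t) * (Γ' t * E j)) := by
    rw [hEA t j, hqc]
  have h_cBc : E j * (star (Γ t) * Γ' t) * E j = E j * (star (Γ t) * (Γ' t * E j)) := by
    noncomm_ring
  exact aux_horiz_term (E j) (Γ t) (G t) (Γ' t) (A t)
    (E j * (star (Γ t) * (Γ' t * E j)))
    (hU1 t ht) (hcomm j) (hscomm j) h_cac h_cBc
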